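/- Let v : 2^O → ℝ be a submodular function (v(∅) = 0 and for all S ⊆ T ⊆ O and o ∉ T, v(S∪{o}) − v(S) ≥ v(T∪{o}) − v(T)) whose marginal gains all lie in a two-element set A = {a, b} with a < b. Then v is order-neutral: for any bundle S ⊆ O and any two orderings π, π' of the elements of S, the sorted vectors of marginal gains obtained by adding elements of S one at a time in the orders π and π' coincide. -/

import Mathlib

open Finset

/-- A set function is submodular: `v ∅ = 0` and decreasing marginal gains. -/
def Submodular {α : Type*} [DecidableEq α] (v : Finset α → ℝ) : Prop :=
  v ∅ = 0 ∧ ∀ S T : Finset α, S ⊆ T → ∀ o ∉ T,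
    v (insert o T) - v T ≤ v (insert o S) - v S

/-- The telescoping sum vector of marginal gains along an ordering `l`. -/
def margList {α : Type*} [DecidableEq α] (v : Finset α → ℝ) (l : List α) : List ℝ :=
  (List.range l.length).map fun j =>
    v ((l.take (j + 1)).toFinset) - v ((l.take j).toFinset)

/-- The sorted (ascending) telescoping sum vector. -/
noncomputable def sortedVec {α : Type*} [DecidableEq α] (v : Finset α → ℝ) (l : List α) :
    List ℝ :=
  Multiset.sort (margList v l) (· ≤ ·)

/-- `l` is an ordering of the bundle `S`. -/
def IsOrdering {α : Type*} [DecidableEq α] (l : List α) (S : Finset α) : Prop :=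
  l.Nodup ∧ l.toFinset = S

/-- Order-neutrality: any two orderings of a bundle give the same sorted telescoping
sum vector. -/
def OrderNeutral {α : Type*} [DecidableEq α] (v : Finset α → ℝ) : Prop :=
  ∀ (S : Finset α) (l₁ l₂ : List α), IsOrdering l₁ S → IsOrdering l₂ S →
    sortedVec v l₁ = sortedVec v l₂

-- multiset determination lemma
lemma twoval_sum_card (a b : ℝ) (hne : a ≠ b) (m : Multiset ℝ)
    (h : ∀ x ∈ m, x = a ∨ x = b) :
    m.sum = (m.count a : ℝ) * a + (m.count b : ℝ) * b ∧ m.card = m.count a + m.count b := by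
  induction m using Multiset.induction with
  | empty => simp
  | cons x s ih =>
    obtain ⟨hs, hc⟩ := ih (fun y hy => h y (Multiset.mem_cons_of_mem hy))
    rcases h x (Multiset.mem_cons_self x s) with rfl | rfl
    · simp [Multiset.count_cons, hne, Ne.symm hne, hs, hc]
      constructor
      · push_cast; ring
      · omega
    · simp [Multiset.count_cons, hne, Ne.symm hne, hs, hc]
      constructor
      · push_cast; ring
      · omega

lemma twoval_multiset_eq (a b : ℝ) (hne : a ≠ b) (m₁ m₂ : Multiset ℝ)
    (h1 : ∀ x ∈ m₁, x = a ∨ x = b) (h2 : ∀ x ∈ m₂, x = a ∨ x = b)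
    (hcard : m₁.card = m₂.card) (hsum : m₁.sum = m₂.sum) : m₁ = m₂ := by
  obtain ⟨hs1, hc1⟩ := twoval_sum_card a b hne m₁ h1
  obtain ⟨hs2, hc2⟩ := twoval_sum_card a b hne m₂ h2
  have hca : m₁.count a = m₂.count a := by
    have hd : (m₁.count a : ℝ) - m₂.count a = (m₂.count b : ℝ) - m₁.count b := by
      have : (m₁.count a : ℝ) + m₁.count b = (m₂.count a : ℝ) + m₂.count b := by
        rw [← Nat.cast_add, ← Nat.cast_add, ← hc1, ← hc2, hcard]
      linarith
    have h0 : ((m₁.count a : ℝ) - m₂.count a) * (a - b) = 0 := by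
      rw [hs1, hs2] at hsum; linear_combination hsum - b * hd
    rcases mul_eq_zero.mp h0 with h | h
    · have : (m₁.count a : ℝ) = m₂.count a := by linarith [sub_eq_zero.mp h]
      exact_mod_cast this
    · exact absurd (sub_eq_zero.mp h) hne
  have hcb : m₁.count b = m₂.count b := by omega
  ext x
  by_cases hxa : x = a
  · subst hxa; exact hca
  by_cases hxb : x = b
  · subst hxb; exact hcb
  · rw [Multiset.count_eq_zero_of_notMem, Multiset.count_eq_zero_of_notMem]
    · intro hx; rcases h2 x hx with h|h <;> contradiction
    · intro hx; rcases h1 x hx with h|h <;> contradiction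

lemma margList_take_succ {α : Type*} [DecidableEq α] (l : List α) (hl : l.Nodup)
    {j : ℕ} (hj : j < l.length) :
    (l.take (j+1)).toFinset = insert (l.get ⟨j, hj⟩) ((l.take j).toFinset) ∧
    l.get ⟨j, hj⟩ ∉ (l.take j).toFinset := by
  have htake : l.take (j+1) = l.take j ++ [l.get ⟨j, hj⟩] := by
    rw [List.take_succ, List.getElem?_eq_getElem hj]; rfl
  have hnd : (l.take (j+1)).Nodup := hl.sublist (List.take_sublist _ _)
  rw [htake] at hnd
  have hnotmem : l.get ⟨j, hj⟩ ∉ l.take j := by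
    intro h
    exact (List.disjoint_of_nodup_append hnd) h (List.mem_singleton_self _)
  constructor
  · rw [htake]; simp only [List.toFinset_append, List.toFinset_cons, List.toFinset_nil,
      LawfulSingleton.insert_empty_eq, Finset.union_empty]
    rw [Finset.union_comm, Finset.insert_eq]
  · simpa using hnotmem

lemma margList_mem {α : Type*} [DecidableEq α] (v : Finset α → ℝ) (a b : ℝ)
    (hvals : ∀ (S : Finset α) (o : α), o ∉ S → v (insert o S) - v S ∈ ({a, b} : Set ℝ))
    (l : List α) (hl : l.Nodup) : ∀ x ∈ margList v l, x = a ∨ x = b := by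
  intro x hx
  simp only [margList, List.mem_map, List.mem_range] at hx
  obtain ⟨j, hj, rfl⟩ := hx
  obtain ⟨h1, h2⟩ := margList_take_succ l hl hj
  rw [h1]
  have := hvals _ _ h2
  simpa [Set.mem_insert_iff] using this

lemma list_sum_range (f : ℕ → ℝ) (n : ℕ) :
    ((List.range n).map f).sum = ∑ j ∈ Finset.range n, f j := by
  induction n with
  | zero => simp
  | succ n ih =>
    rw [List.range_succ, List.map_append, List.sum_append, Finset.sum_range_succ, ih]; simp

lemma margList_sum {α : Type*} [DecidableEq α] (v : Finset α → ℝ) (h0 : v ∅ = 0)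
    (l : List α) : (margList v l).sum = v l.toFinset := by
  have : (margList v l).sum = ∑ j ∈ Finset.range l.length,
      (v ((l.take (j + 1)).toFinset) - v ((l.take j).toFinset)) := by
    rw [margList, list_sum_range]
  rw [this, Finset.sum_range_sub (fun j => v ((l.take j).toFinset))]
  simp [h0]

/-- a submodular function whose marginal gains all lie in a two-element
set `{a, b}` with `a < b` is order-neutral. -/
theorem twoValued_submodular_orderNeutral {α : Type*} [Fintype α] [DecidableEq α]
    (v : Finset α → ℝ) (a b : ℝ) (hab : a < b) (hsub : Submodular v)
    (hvals : ∀ (S : Finset α) (o : α), o ∉ S → v (insert o S) - v S ∈ ({a, b} : Set ℝ)) :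
    OrderNeutral v := by
  rintro S l₁ l₂ ⟨hn1, hf1⟩ ⟨hn2, hf2⟩
  unfold sortedVec
  congr 1
  apply twoval_multiset_eq a b (ne_of_lt hab)
  · exact fun x hx => margList_mem v a b hvals l₁ hn1 x (by simpa using hx)
  · exact fun x hx => margList_mem v a b hvals l₂ hn2 x (by simpa using hx)
  · show (margList v l₁).length = (margList v l₂).length
    simp only [margList, List.length_map, List.length_range]
    rw [← List.toFinset_card_of_nodup hn1, ← List.toFinset_card_of_nodup hn2, hf1, hf2]
  · show (margList v l₁).sum = (margList v l₂).sum
    rw [margList_sum v hsub.1, margList_sum v hsub.1, hf1, hf2]
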